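/- Let r2 ≥ 4 be even. There is no graph with parameters (r2, r3) for any r3 with C(r2−1, 2) < r3 < 4·C(r2/2, 2), and none for any r3 with 4·C(r2/2, 2) < r3 < C(r2, 2). -/

import Mathlib

open SimpleGraph Finset

/-- The K3-degree of a vertex: the number of triangles (3-cliques) of `G` containing `v`. -/
noncomputable def K3deg {V : Type*} (G : SimpleGraph V) (v : V) : ℕ :=
  {t : Finset V | G.IsNClique 3 t ∧ v ∈ t}.ncard

/-- The degree of a vertex, as the cardinality of its open neighbourhood. -/
noncomputable def deg {V : Type*} (G : SimpleGraph V) (v : V) : ℕ :=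
  (G.neighborSet v).ncard

/-- `G` has parameters `(r2, r3)`: every vertex has degree `r2` and K3-degree `r3`. -/
def HasParams {V : Type*} (G : SimpleGraph V) (r2 r3 : ℕ) : Prop :=
  ∀ v : V, deg G v = r2 ∧ K3deg G v = r3

section Aux

open scoped Classical

variable {V : Type} [Fintype V]

/-- neighbours as a Finset -/
noncomputable def Nb (G : SimpleGraph V) (x : V) : Finset V :=
  Finset.univ.filter (fun y => G.Adj x y)

noncomputable def cNb (G : SimpleGraph V) (x : V) : Finset V := insert x (Nb G x)

/-- ordered non-adjacent distinct pairs inside a neighbourhood -/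
noncomputable def nd (G : SimpleGraph V) (x : V) : Finset (V × V) :=
  ((Nb G x) ×ˢ (Nb G x)).filter (fun p => ¬ G.Adj p.1 p.2 ∧ p.1 ≠ p.2)

noncomputable def db (G : SimpleGraph V) (x y : V) : ℕ := ((Nb G x) \ (cNb G y)).card

noncomputable def lam (G : SimpleGraph V) (x y : V) : ℕ := ((Nb G x) ∩ (Nb G y)).card

lemma mem_Nb {G : SimpleGraph V} {x y : V} : y ∈ Nb G x ↔ G.Adj x y := by
  simp [Nb]

lemma mem_cNb {G : SimpleGraph V} {x y : V} : y ∈ cNb G x ↔ y = x ∨ G.Adj x y := by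
  simp [cNb, mem_Nb]

lemma not_mem_cNb {G : SimpleGraph V} {x y : V} (h1 : y ≠ x) (h2 : ¬ G.Adj x y) :
    y ∉ cNb G x := by
  simp [mem_cNb, h1, h2]

lemma lam_comm {G : SimpleGraph V} (x y : V) : lam G x y = lam G y x := by
  rw [lam, lam, Finset.inter_comm]

/-- `N x` splits as `(N x ∩ N y) ⊔ {y} ⊔ (N x \\ N[y])` for adjacent `x y`. -/
lemma lam_db_split {G : SimpleGraph V} {x y : V} (h : G.Adj x y) :
    (Nb G x).card = lam G x y + 1 + db G x y := by
  have hy : y ∈ Nb G x := mem_Nb.2 h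
  have h1 : (Nb G x ∩ cNb G y).card + (Nb G x \ cNb G y).card = (Nb G x).card :=
    Finset.card_inter_add_card_sdiff _ _
  have h2 : Nb G x ∩ cNb G y = insert y (Nb G x ∩ Nb G y) := by
    ext v
    simp only [Finset.mem_inter, mem_cNb, Finset.mem_insert]
    constructor
    · rintro ⟨hv, rfl | hv2⟩
      · exact Or.inl rfl
      · exact Or.inr ⟨hv, mem_Nb.2 hv2⟩
    · rintro (rfl | ⟨hv, hv2⟩)
      · exact ⟨hy, Or.inl rfl⟩
      · exact ⟨hv, Or.inr (mem_Nb.1 hv2)⟩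
  have h3 : y ∉ Nb G x ∩ Nb G y := by
    simp [mem_Nb, G.irrefl]
  rw [h2, Finset.card_insert_of_notMem h3] at h1
  rw [db, lam]
  omega

lemma db_symm {G : SimpleGraph V} {n : ℕ} (hdeg : ∀ v, (Nb G v).card = n)
    {x y : V} (h : G.Adj x y) : db G x y = db G y x := by
  have h1 := lam_db_split h
  have h2 := lam_db_split h.symm
  rw [hdeg x] at h1
  rw [hdeg y, lam_comm y x] at h2
  omega

noncomputable def ed (G : SimpleGraph V) (x : V) : Finset (V × V) :=
  ((Nb G x) ×ˢ (Nb G x)).filter (fun p => G.Adj p.1 p.2)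

lemma card_nd_add_ed {G : SimpleGraph V} (x : V) :
    (nd G x).card + (ed G x).card = (Nb G x).card * (Nb G x).card - (Nb G x).card := by
  have h1 : nd G x = (Nb G x).offDiag.filter (fun p => ¬ G.Adj p.1 p.2) := by
    ext p
    simp only [nd, Finset.mem_filter, Finset.mem_product, Finset.mem_offDiag]
    tauto
  have h2 : ed G x = (Nb G x).offDiag.filter (fun p => G.Adj p.1 p.2) := by
    ext p
    simp only [ed, Finset.mem_filter, Finset.mem_product, Finset.mem_offDiag]
    exact ⟨fun ⟨⟨a,b⟩,c⟩ => ⟨⟨a,b,c.ne⟩,c⟩, fun ⟨⟨a,b,_⟩,c⟩ => ⟨⟨a,b⟩,c⟩⟩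
  have h3 := Finset.card_filter_add_card_filter_not
    (s := (Nb G x).offDiag) (p := fun p => G.Adj p.1 p.2)
  rw [Finset.offDiag_card] at h3
  rw [h1, h2]
  omega

lemma sum_db {G : SimpleGraph V} (x : V) :
    ∑ y ∈ Nb G x, db G x y = (nd G x).card := by
  rw [Finset.card_eq_sum_card_fiberwise (f := Prod.snd) (t := Nb G x)
    (fun p (hp : p ∈ nd G x) => by simp only [nd, Finset.mem_filter, Finset.mem_product] at hp; exact hp.1.2)]
  apply Finset.sum_congr rfl
  intro y hy
  have : (nd G x).filter (fun p => p.2 = y) = (Nb G x \ cNb G y) ×ˢ {y} := by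
    ext p
    simp only [nd, Finset.mem_filter, Finset.mem_product, Finset.mem_sdiff,
      Finset.mem_singleton, cNb, Finset.mem_insert, mem_Nb]
    constructor
    · rintro ⟨⟨⟨h1, h2⟩, h3, h4⟩, rfl⟩
      exact ⟨⟨h1, by push_neg; exact ⟨h4, fun hc => h3 hc.symm⟩⟩, rfl⟩
    · rintro ⟨⟨h1, h2⟩, rfl⟩
      push_neg at h2
      exact ⟨⟨⟨h1, mem_Nb.1 hy⟩, fun hc => h2.2 hc.symm, h2.1⟩, rfl⟩
  rw [this, Finset.card_product, Finset.card_singleton, mul_one, db]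

lemma card_ed {G : SimpleGraph V} (x : V) : (ed G x).card = 2 * K3deg G x := by
  have hfin : {t : Finset V | G.IsNClique 3 t ∧ x ∈ t}.Finite := Set.toFinite _
  set T : Finset (Finset V) := hfin.toFinset with hT
  have hK : K3deg G x = T.card := by
    rw [K3deg, Set.ncard_eq_toFinset_card _ hfin]
  have hmap : ∀ p ∈ ed G x, ({x, p.1, p.2} : Finset V) ∈ T := by
    rintro ⟨a, b⟩ hp
    simp only [ed, Finset.mem_filter, Finset.mem_product, mem_Nb] at hp
    obtain ⟨⟨hxa, hxb⟩, hab⟩ := hp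
    simp only [hT, Set.Finite.mem_toFinset, Set.mem_setOf_eq]
    exact ⟨is3Clique_triple_iff.2 ⟨hxa, hxb, hab⟩, by simp⟩
  have hfib : ∀ t ∈ T, ((ed G x).filter (fun p => ({x, p.1, p.2} : Finset V) = t)).card = 2 := by
    intro t ht
    simp only [hT, Set.Finite.mem_toFinset, Set.mem_setOf_eq] at ht
    obtain ⟨hcl, hxt⟩ := ht
    obtain ⟨u, v, w, huv, huw, hvw, htuvw⟩ := Finset.card_eq_three.1 hcl.2
    have hex : ∃ a b : V, a ≠ b ∧ t = {x, a, b} := by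
      subst htuvw
      simp only [Finset.mem_insert, Finset.mem_singleton] at hxt
      rcases hxt with rfl | rfl | rfl
      · exact ⟨v, w, hvw, rfl⟩
      · exact ⟨u, w, huw, by ext z; simp; tauto⟩
      · exact ⟨u, v, huv, by ext z; simp; tauto⟩
    obtain ⟨a, b, hab, rfl⟩ := hex
    obtain ⟨hxa, hxb, hadj⟩ := is3Clique_triple_iff.1 hcl
    have key : (ed G x).filter (fun p => ({x, p.1, p.2} : Finset V) = {x, a, b})
        = {(a, b), (b, a)} := by
      ext ⟨c, d⟩
      simp only [Finset.mem_filter, ed, Finset.mem_product, mem_Nb, Finset.mem_insert,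
        Finset.mem_singleton, Prod.mk.injEq]
      constructor
      · rintro ⟨⟨⟨hxc, hxd⟩, hcd⟩, heq⟩
        have hcm : c ∈ ({x, a, b} : Finset V) := by rw [← heq]; simp
        have hdm : d ∈ ({x, a, b} : Finset V) := by rw [← heq]; simp
        simp only [Finset.mem_insert, Finset.mem_singleton] at hcm hdm
        have hcx : c ≠ x := fun h => G.irrefl (h ▸ hxc)
        have hdx : d ≠ x := fun h => G.irrefl (h ▸ hxd)
        rcases hcm with rfl | rfl | rfl
        · exact absurd rfl hcx
        · rcases hdm with rfl | rfl | rfl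
          · exact absurd rfl hdx
          · exact absurd rfl hcd.ne
          · exact Or.inl ⟨rfl, rfl⟩
        · rcases hdm with rfl | rfl | rfl
          · exact absurd rfl hdx
          · exact Or.inr ⟨rfl, rfl⟩
          · exact absurd rfl hcd.ne
      · rintro (⟨rfl, rfl⟩ | ⟨rfl, rfl⟩)
        · exact ⟨⟨⟨hxa, hxb⟩, hadj⟩, rfl⟩
        · exact ⟨⟨⟨hxb, hxa⟩, hadj.symm⟩, by ext z; simp; tauto⟩
    rw [key]
    rw [Finset.card_insert_of_notMem (by simp [Prod.ext_iff]; rintro rfl; exact absurd rfl hab),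
      Finset.card_singleton]
  rw [Finset.card_eq_sum_card_fiberwise hmap, Finset.sum_congr rfl hfib, Finset.sum_const,
    smul_eq_mul, hK, mul_comm]

/-- swapping coordinates preserves the count of non-adjacent pairs -/
lemma card_swap_rel (G : SimpleGraph V) (s t : Finset V) :
    (((s ×ˢ t).filter (fun p => ¬ G.Adj p.1 p.2)).card : ℕ)
      = ((t ×ˢ s).filter (fun p => ¬ G.Adj p.1 p.2)).card := by
  apply Finset.card_bij' (fun p _ => Prod.swap p) (fun p _ => Prod.swap p)
  · rintro ⟨a, b⟩ hp
    simp only [Finset.mem_filter, Finset.mem_product] at hp ⊢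
    exact ⟨⟨hp.1.2, hp.1.1⟩, fun hadj => hp.2 hadj.symm⟩
  · rintro ⟨a, b⟩ hp
    simp only [Finset.mem_filter, Finset.mem_product] at hp ⊢
    exact ⟨⟨hp.1.2, hp.1.1⟩, fun hadj => hp.2 hadj.symm⟩
  · rintro ⟨a, b⟩ _; rfl
  · rintro ⟨a, b⟩ _; rfl

lemma card_adj_fiber {G : SimpleGraph V} (U B : Finset V) :
    ((U ×ˢ B).filter (fun p => G.Adj p.1 p.2)).card = ∑ u ∈ U, (Nb G u ∩ B).card := by
  rw [Finset.card_eq_sum_card_fiberwise (f := Prod.fst) (t := U)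
    (fun (p : V × V) (hp : p ∈ (U ×ˢ B).filter (fun q : V × V => G.Adj q.1 q.2)) => by simp only [Finset.mem_filter, Finset.mem_product] at hp; exact hp.1.1)]
  apply Finset.sum_congr rfl
  intro u hu
  have : ((U ×ˢ B).filter (fun p => G.Adj p.1 p.2)).filter (fun p => p.1 = u)
      = {u} ×ˢ (Nb G u ∩ B) := by
    ext ⟨c, d⟩
    simp only [Finset.mem_filter, Finset.mem_product, Finset.mem_singleton, Finset.mem_inter,
      mem_Nb]
    constructor
    · rintro ⟨⟨⟨h1, h2⟩, h3⟩, rfl⟩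
      exact ⟨rfl, h3, h2⟩
    · rintro ⟨rfl, h1, h2⟩
      exact ⟨⟨⟨hu, h2⟩, h1⟩, rfl⟩
  rw [this, Finset.card_product, Finset.card_singleton, one_mul]

/-- Step 1 : every edge has `db ≤ 2`. -/
lemma db_le_two {G : SimpleGraph V} {n M : ℕ}
    (hdeg : ∀ v, (Nb G v).card = n) (hnd : ∀ v, (nd G v).card = M)
    (hM4 : M ≤ 2*n - 4) (hn : 4 ≤ n) {x y : V} (h : G.Adj x y) : db G x y ≤ 2 := by
  by_contra hD
  push_neg at hD
  set Δ := db G x y with hΔdef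
  set U : Finset V := Nb G x ∩ Nb G y with hU
  set C : Finset V := Nb G x \ cNb G y with hC
  set B : Finset V := Nb G y \ cNb G x with hB
  have hCcard : C.card = Δ := rfl
  have hBcard : B.card = Δ := (db_symm hdeg h).symm
  have hlam : n = U.card + 1 + Δ := by
    have := lam_db_split h; rw [hdeg] at this; exact this
  set eUB : ℕ := ∑ u ∈ U, (Nb G u ∩ B).card with heUB
  -- decomposition of Nb G x
  have hyC : y ∉ C := by simp [hC, mem_cNb]
  have hyU : y ∉ U := by simp [hU, mem_Nb, G.irrefl]
  have hCU : Disjoint C U := by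
    rw [Finset.disjoint_left]
    intro a haC haU
    rw [hC, Finset.mem_sdiff] at haC
    exact haC.2 (by rw [mem_cNb]; exact Or.inr (mem_Nb.1 (Finset.mem_inter.1 haU).2))
  have hNbx : Nb G x = insert y (C ∪ U) := by
    ext v
    simp only [Finset.mem_insert, Finset.mem_union, hC, hU, Finset.mem_sdiff, Finset.mem_inter,
      mem_cNb, mem_Nb]
    constructor
    · intro hv
      by_cases h1 : v = y
      · exact Or.inl h1
      · by_cases h2 : G.Adj y v
        · exact Or.inr (Or.inr ⟨hv, h2⟩)
        · exact Or.inr (Or.inl ⟨hv, by push_neg; exact ⟨h1, h2⟩⟩)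
    · rintro (rfl | ⟨hv, _⟩ | ⟨hv, _⟩)
      exacts [h, hv, hv]
  -- inequality (ii) : M ≥ 2Δ + eUB
  have hii : 2*Δ + eUB ≤ M := by
    have hsum : ∑ v ∈ Nb G x, db G x v = M := by rw [sum_db, hnd]
    rw [hNbx, Finset.sum_insert (by simp [Finset.mem_union, hyC, hyU]),
      Finset.sum_union hCU] at hsum
    have h1 : ∀ c ∈ C, 1 ≤ db G x c := by
      intro c hc
      rw [hC, Finset.mem_sdiff, mem_cNb] at hc
      push_neg at hc
      apply Finset.card_pos.2
      refine ⟨y, Finset.mem_sdiff.2 ⟨mem_Nb.2 h, ?_⟩⟩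
      rw [mem_cNb]
      push_neg
      exact ⟨fun he => hc.2.1 he.symm, fun ha => hc.2.2 ha.symm⟩
    have h2 : ∀ u ∈ U, (Nb G u ∩ B).card ≤ db G x u := by
      intro u hu
      rw [db_symm hdeg (mem_Nb.1 (Finset.mem_inter.1 hu).1), db]
      apply Finset.card_le_card
      intro v hv
      rw [Finset.mem_inter] at hv
      rw [Finset.mem_sdiff]
      exact ⟨hv.1, (Finset.mem_sdiff.1 hv.2).2⟩
    have hc1 : Δ ≤ ∑ c ∈ C, db G x c := by
      calc Δ = ∑ _c ∈ C, 1 := by rw [Finset.sum_const, smul_eq_mul, mul_one, hCcard]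
      _ ≤ ∑ c ∈ C, db G x c := Finset.sum_le_sum h1
    have hc2 : eUB ≤ ∑ u ∈ U, db G x u := Finset.sum_le_sum h2
    omega
  -- inequality (i) : M + 2*eUB ≥ 2Δ + 2*U.card*Δ
  have hi : 2*Δ + 2*(U.card * Δ) ≤ M + 2*eUB := by
    set P1 : Finset (V × V) := {x} ×ˢ B with hP1
    set P2 : Finset (V × V) := B ×ˢ {x} with hP2
    set P3 : Finset (V × V) := (U ×ˢ B).filter (fun p => ¬ G.Adj p.1 p.2) with hP3
    set P4 : Finset (V × V) := (B ×ˢ U).filter (fun p => ¬ G.Adj p.1 p.2) with hP4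
    have hxB : x ∉ B := by simp [hB, mem_cNb]
    have hxU : x ∉ U := by simp [hU, mem_Nb, G.irrefl]
    have hUB : ∀ a, a ∈ U → a ∉ B := by
      intro a haU
      rw [hB, Finset.mem_sdiff]
      push_neg
      intro _
      rw [mem_cNb]
      exact Or.inr (mem_Nb.1 (Finset.mem_inter.1 haU).1)
    have hBy : ∀ c, c ∈ B → G.Adj y c ∧ ¬ G.Adj x c ∧ c ≠ x := by
      intro c hc
      rw [hB, Finset.mem_sdiff, mem_cNb] at hc
      push_neg at hc
      exact ⟨mem_Nb.1 hc.1, hc.2.2, hc.2.1⟩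
    have hUy : ∀ c, c ∈ U → G.Adj y c := fun c hc => mem_Nb.1 (Finset.mem_inter.1 hc).2
    have hsub : P1 ∪ P2 ∪ P3 ∪ P4 ⊆ nd G y := by
      rintro ⟨a, b⟩ hp
      simp only [hP1, hP2, hP3, hP4, Finset.mem_union, Finset.mem_product, Finset.mem_singleton,
        Finset.mem_filter] at hp
      simp only [nd, Finset.mem_filter, Finset.mem_product, mem_Nb]
      rcases hp with ((⟨rfl, hb⟩ | ⟨ha, rfl⟩) | ⟨⟨ha, hb⟩, hnadj⟩) | ⟨⟨ha, hb⟩, hnadj⟩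
      · obtain ⟨h1, h2, h3⟩ := hBy b hb
        exact ⟨⟨h.symm, h1⟩, h2, fun he => h3 he.symm⟩
      · obtain ⟨h1, h2, h3⟩ := hBy a ha
        exact ⟨⟨h1, h.symm⟩, fun hadj => h2 hadj.symm, h3⟩
      · obtain ⟨h1, h2, h3⟩ := hBy b hb
        exact ⟨⟨hUy a ha, h1⟩, hnadj, fun he => (hUB a ha) (by rw [he]; exact hb)⟩
      · obtain ⟨h1, h2, h3⟩ := hBy a ha
        exact ⟨⟨h1, hUy b hb⟩, hnadj, fun he => (hUB b hb) (by rw [← he]; exact ha)⟩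
    have hcard_le : (P1 ∪ P2 ∪ P3 ∪ P4).card ≤ M := by
      rw [← hnd y]; exact Finset.card_le_card hsub
    have hmemP : ∀ p : V × V, (p ∈ P1 → p.1 = x ∧ p.2 ∈ B) ∧ (p ∈ P2 → p.1 ∈ B ∧ p.2 = x)
        ∧ (p ∈ P3 → p.1 ∈ U ∧ p.2 ∈ B) ∧ (p ∈ P4 → p.1 ∈ B ∧ p.2 ∈ U) := by
      rintro ⟨a, b⟩
      simp only [hP1, hP2, hP3, hP4, Finset.mem_product, Finset.mem_singleton, Finset.mem_filter]
      tauto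
    have d12 : Disjoint P1 P2 := by
      rw [Finset.disjoint_left]
      intro p hp hq
      obtain ⟨h1, h2⟩ := (hmemP p).1 hp
      obtain ⟨h3, h4⟩ := (hmemP p).2.1 hq
      exact hxB (h1 ▸ h3)
    have d123 : Disjoint (P1 ∪ P2) P3 := by
      rw [Finset.disjoint_left]
      intro p hp hq
      obtain ⟨h1, h2⟩ := (hmemP p).2.2.1 hq
      rcases Finset.mem_union.1 hp with hp1 | hp2
      · exact hxU (((hmemP p).1 hp1).1 ▸ h1)
      · exact hxB (((hmemP p).2.1 hp2).2 ▸ h2)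
    have d1234 : Disjoint (P1 ∪ P2 ∪ P3) P4 := by
      rw [Finset.disjoint_left]
      intro p hp hq
      obtain ⟨h1, h2⟩ := (hmemP p).2.2.2 hq
      rcases Finset.mem_union.1 hp with hp' | hp3
      · rcases Finset.mem_union.1 hp' with hp1 | hp2
        · exact hxB (((hmemP p).1 hp1).1 ▸ h1)
        · exact hxU (((hmemP p).2.1 hp2).2 ▸ h2)
      · exact hUB p.1 ((hmemP p).2.2.1 hp3).1 h1
    have hcards : (P1 ∪ P2 ∪ P3 ∪ P4).card = Δ + Δ + P3.card + P4.card := by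
      rw [Finset.card_union_of_disjoint d1234, Finset.card_union_of_disjoint d123,
        Finset.card_union_of_disjoint d12]
      simp only [hP1, hP2, Finset.card_product, Finset.card_singleton, one_mul, mul_one, hBcard]
    have hP34 : P4.card = P3.card := by
      rw [hP3, hP4]
      exact card_swap_rel G B U
    have hsplit3 : eUB + P3.card = U.card * Δ := by
      have := Finset.card_filter_add_card_filter_not
        (s := U ×ˢ B) (p := fun p => G.Adj p.1 p.2)
      rw [Finset.card_product, hBcard, card_adj_fiber] at this
      rw [← heUB] at this
      convert this using 2
    omega
  -- combine
  obtain ⟨e, he⟩ : ∃ e, Δ = e + 3 := ⟨Δ - 3, by omega⟩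
  have hM4' : M + 4 ≤ 2 * n := by omega
  nlinarith [hii, hi, hlam, he, hM4']

/-- Step 2 : common-neighbour bound for non-adjacent pairs. -/
lemma step2 {G : SimpleGraph V} {n M : ℕ}
    (hdeg : ∀ v, (Nb G v).card = n) (hnd : ∀ v, (nd G v).card = M) (hn : 4 ≤ n)
    {x w q : V} (hxw : ¬ G.Adj x w) (hne : x ≠ w) (hqx : G.Adj q x) (hqw : G.Adj q w) :
    2 * n ≤ 2 * lam G x w + M := by
  set a := db G q x with ha
  set b := db G q w with hb
  have hxq : x ∈ Nb G q := mem_Nb.2 hqx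
  have hwq : w ∈ Nb G q := mem_Nb.2 hqw
  have hwmem : w ∈ Nb G q \ cNb G x := by
    rw [Finset.mem_sdiff, mem_cNb]
    push_neg
    exact ⟨hwq, fun he => hne he.symm, hxw⟩
  have hxmem : x ∈ Nb G q \ cNb G w := by
    rw [Finset.mem_sdiff, mem_cNb]
    push_neg
    exact ⟨hxq, hne, fun hadj => hxw hadj.symm⟩
  -- part (a) : lam + a + b ≥ n + 1
  have parta : n + 1 ≤ lam G x w + a + b := by
    set W : Finset V := Nb G q \ {x, w} with hW
    have hWcard : W.card = n - 2 := by
      rw [hW, Finset.card_sdiff_of_subset (by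
        intro v hv
        simp only [Finset.mem_insert, Finset.mem_singleton] at hv
        rcases hv with rfl | rfl
        exacts [hxq, hwq])]
      rw [hdeg, Finset.card_insert_of_notMem (by simp [hne]), Finset.card_singleton]
    set Z : Finset V := W.filter (fun v => G.Adj x v ∧ G.Adj w v) with hZ
    set E1 : Finset V := (Nb G q \ cNb G x).erase w with hE1
    set E2 : Finset V := (Nb G q \ cNb G w).erase x with hE2
    have hcover : W ⊆ Z ∪ E1 ∪ E2 := by
      intro v hv
      have hv' := hv
      rw [hW, Finset.mem_sdiff, Finset.mem_insert, Finset.mem_singleton] at hv'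
      push_neg at hv'
      obtain ⟨hvq, hvx, hvw⟩ := hv'
      simp only [Finset.mem_union, hZ, Finset.mem_filter, hE1, hE2, Finset.mem_erase,
        Finset.mem_sdiff, mem_cNb]
      by_cases h1 : G.Adj x v
      · by_cases h2 : G.Adj w v
        · exact Or.inl (Or.inl ⟨hv, h1, h2⟩)
        · refine Or.inr ⟨hvx, hvq, ?_⟩
          push_neg
          exact ⟨hvw, h2⟩
      · refine Or.inl (Or.inr ⟨hvw, hvq, ?_⟩)
        push_neg
        exact ⟨hvx, h1⟩
    have hE1card : E1.card = a - 1 := by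
      rw [hE1, Finset.card_erase_of_mem hwmem, ha, db]
    have hE2card : E2.card = b - 1 := by
      rw [hE2, Finset.card_erase_of_mem hxmem, hb, db]
    have ha1 : 1 ≤ a := by
      rw [ha, db]; exact Finset.card_pos.2 ⟨w, hwmem⟩
    have hb1 : 1 ≤ b := by
      rw [hb, db]; exact Finset.card_pos.2 ⟨x, hxmem⟩
    have hWle : W.card ≤ Z.card + E1.card + E2.card := by
      calc W.card ≤ (Z ∪ E1 ∪ E2).card := Finset.card_le_card hcover
      _ ≤ (Z ∪ E1).card + E2.card := Finset.card_union_le _ _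
      _ ≤ Z.card + E1.card + E2.card := by
          exact Nat.add_le_add_right (Finset.card_union_le _ _) _
    have hlamZ : Z.card + 1 ≤ lam G x w := by
      have hq1 : q ∈ Nb G x ∩ Nb G w := by
        rw [Finset.mem_inter, mem_Nb, mem_Nb]
        exact ⟨hqx.symm, hqw.symm⟩
      have hq2 : q ∉ Z := by
        rw [hZ, Finset.mem_filter, hW, Finset.mem_sdiff]
        rintro ⟨⟨hq3, _⟩, _⟩
        exact G.irrefl (mem_Nb.1 hq3)
      have hZsub : insert q Z ⊆ Nb G x ∩ Nb G w := by
        intro v hv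
        rcases Finset.mem_insert.1 hv with rfl | hv2
        · exact hq1
        · rw [hZ, Finset.mem_filter] at hv2
          rw [Finset.mem_inter, mem_Nb, mem_Nb]
          exact hv2.2
      calc Z.card + 1 = (insert q Z).card := (Finset.card_insert_of_notMem hq2).symm
      _ ≤ lam G x w := Finset.card_le_card hZsub
    omega
  -- part (b) : 2a + 2b ≤ M + 2
  have partb : 2*a + 2*b ≤ M + 2 := by
    set S1 : Finset V := Nb G q \ cNb G x with hS1
    set S2 : Finset V := Nb G q \ cNb G w with hS2
    set A : Finset (V × V) := (S1 ×ˢ {x}) ∪ ({x} ×ˢ S1) with hA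
    set Bs : Finset (V × V) := (S2 ×ˢ {w}) ∪ ({w} ×ˢ S2) with hBs
    have hxS1 : x ∉ S1 := by simp [hS1, mem_cNb]
    have hwS2 : w ∉ S2 := by simp [hS2, mem_cNb]
    have hAcard : A.card = 2*a := by
      rw [hA, Finset.card_union_of_disjoint (by
        rw [Finset.disjoint_left]
        rintro ⟨c, d⟩ hp hq
        simp only [Finset.mem_product, Finset.mem_singleton] at hp hq
        exact hxS1 (hq.1 ▸ hp.1)), Finset.card_product, Finset.card_product]
      simp only [Finset.card_singleton, mul_one, one_mul, ha, db, hS1]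
      ring
    have hBcard : Bs.card = 2*b := by
      rw [hBs, Finset.card_union_of_disjoint (by
        rw [Finset.disjoint_left]
        rintro ⟨c, d⟩ hp hq
        simp only [Finset.mem_product, Finset.mem_singleton] at hp hq
        exact hwS2 (hq.1 ▸ hp.1)), Finset.card_product, Finset.card_product]
      simp only [Finset.card_singleton, mul_one, one_mul, hb, db, hS2]
      ring
    have hsub : A ∪ Bs ⊆ nd G q := by
      rintro ⟨c, d⟩ hp
      simp only [hA, hBs, Finset.mem_union, Finset.mem_product, Finset.mem_singleton] at hp
      simp only [nd, Finset.mem_filter, Finset.mem_product]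
      have hS1mem : ∀ v, v ∈ S1 → v ∈ Nb G q ∧ ¬ G.Adj x v ∧ v ≠ x := by
        intro v hv
        rw [hS1, Finset.mem_sdiff, mem_cNb] at hv
        push_neg at hv
        exact ⟨hv.1, hv.2.2, hv.2.1⟩
      have hS2mem : ∀ v, v ∈ S2 → v ∈ Nb G q ∧ ¬ G.Adj w v ∧ v ≠ w := by
        intro v hv
        rw [hS2, Finset.mem_sdiff, mem_cNb] at hv
        push_neg at hv
        exact ⟨hv.1, hv.2.2, hv.2.1⟩
      rcases hp with (⟨hc, rfl⟩ | ⟨rfl, hd⟩) | (⟨hc, rfl⟩ | ⟨rfl, hd⟩)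
      · obtain ⟨h1, h2, h3⟩ := hS1mem c hc
        exact ⟨⟨h1, hxq⟩, fun hadj => h2 hadj.symm, h3⟩
      · obtain ⟨h1, h2, h3⟩ := hS1mem d hd
        exact ⟨⟨hxq, h1⟩, h2, fun he => h3 he.symm⟩
      · obtain ⟨h1, h2, h3⟩ := hS2mem c hc
        exact ⟨⟨h1, hwq⟩, fun hadj => h2 hadj.symm, h3⟩
      · obtain ⟨h1, h2, h3⟩ := hS2mem d hd
        exact ⟨⟨hwq, h1⟩, h2, fun he => h3 he.symm⟩
    have hinter : A ∩ Bs ⊆ {(w, x), (x, w)} := by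
      rintro ⟨c, d⟩ hp
      rw [Finset.mem_inter] at hp
      obtain ⟨hpA, hpB⟩ := hp
      simp only [hA, hBs, Finset.mem_union, Finset.mem_product, Finset.mem_singleton] at hpA hpB
      simp only [Finset.mem_insert, Finset.mem_singleton, Prod.mk.injEq]
      rcases hpA with ⟨hc1, hd1⟩ | ⟨hc1, hd1⟩ <;> rcases hpB with ⟨hc2, hd2⟩ | ⟨hc2, hd2⟩
      · exact absurd (hd1.symm.trans hd2) hne
      · exact Or.inl ⟨hc2, hd1⟩
      · exact Or.inr ⟨hc1, hd2⟩
      · exact absurd (hc1.symm.trans hc2) hne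
    have h1 : (A ∪ Bs).card + (A ∩ Bs).card = A.card + Bs.card :=
      Finset.card_union_add_card_inter A Bs
    have h2 : (A ∪ Bs).card ≤ M := by
      rw [← hnd q]; exact Finset.card_le_card hsub
    have h3 : (A ∩ Bs).card ≤ 2 := by
      refine (Finset.card_le_card hinter).trans ?_
      refine (Finset.card_insert_le _ _).trans ?_
      simp
    omega
  omega

/-- Step 3 : there is no geodesic of length 3. -/
lemma step3 {G : SimpleGraph V} {n M : ℕ}
    (hdeg : ∀ v, (Nb G v).card = n) (hnd : ∀ v, (nd G v).card = M)
    (hM4 : M ≤ 2*n - 4) (hMn : M ≠ n) (hn : 4 ≤ n) (hneven : Even n)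
    {x y z w : V} (hxy : G.Adj x y) (hyz : G.Adj y z) (hzw : G.Adj z w)
    (hxz : ¬ G.Adj x z) (hxzne : x ≠ z) (hxw : ¬ G.Adj x w)
    (hcom : Nb G x ∩ Nb G w = ∅) : False := by
  have hyx : y ∈ Nb G x := mem_Nb.2 hxy
  have hxwne : x ≠ w := by
    rintro rfl
    rw [Finset.inter_self] at hcom
    rw [hcom] at hyx
    exact absurd hyx (Finset.notMem_empty y)
  have hyw : ¬ G.Adj y w := by
    intro hadj
    have : y ∈ Nb G x ∩ Nb G w := Finset.mem_inter.2 ⟨hyx, mem_Nb.2 hadj.symm⟩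
    rw [hcom] at this
    exact absurd this (Finset.notMem_empty y)
  have hywne : y ≠ w := by
    rintro rfl
    exact hxw hxy
  -- counting inside Nb z
  have hcount1 : lam G z x + 1 + lam G z w ≤ n := by
    have hdisj1 : Disjoint (Nb G z ∩ Nb G x) (Nb G z ∩ Nb G w) := by
      rw [Finset.disjoint_left]
      intro v hv1 hv2
      have : v ∈ Nb G x ∩ Nb G w :=
        Finset.mem_inter.2 ⟨(Finset.mem_inter.1 hv1).2, (Finset.mem_inter.1 hv2).2⟩
      rw [hcom] at this
      exact absurd this (Finset.notMem_empty v)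
    have hwnot : w ∉ (Nb G z ∩ Nb G x) ∪ (Nb G z ∩ Nb G w) := by
      simp only [Finset.mem_union, Finset.mem_inter, mem_Nb]
      push_neg
      exact ⟨fun _ hc => hxw hc, fun _ => G.irrefl⟩
    have hsub : insert w ((Nb G z ∩ Nb G x) ∪ (Nb G z ∩ Nb G w)) ⊆ Nb G z := by
      intro v hv
      rcases Finset.mem_insert.1 hv with rfl | hv2
      · exact mem_Nb.2 hzw
      · rcases Finset.mem_union.1 hv2 with hv3 | hv3
        exacts [(Finset.mem_inter.1 hv3).1, (Finset.mem_inter.1 hv3).1]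
    calc lam G z x + 1 + lam G z w
        = (insert w ((Nb G z ∩ Nb G x) ∪ (Nb G z ∩ Nb G w))).card := by
          rw [Finset.card_insert_of_notMem hwnot, Finset.card_union_of_disjoint hdisj1,
            lam, lam]
          ring
      _ ≤ n := by rw [← hdeg z]; exact Finset.card_le_card hsub
  have hcount2 : 2 * n ≤ 2 * lam G x z + M := step2 hdeg hnd hn hxz hxzne hxy.symm hyz
  have hsplitzw : n = lam G z w + 1 + db G z w := by
    have := lam_db_split hzw; rw [hdeg] at this; exact this
  have hdbzw : db G z w ≤ 2 := db_le_two hdeg hnd hM4 hn hzw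
  have hlamc : lam G x z = lam G z x := lam_comm x z
  -- tightness
  have hMeq : M = 2*n - 4 := by omega
  have hn6 : 6 ≤ n := by
    rcases hneven with ⟨m, hm⟩
    omega
  have hlamzw : lam G z w = n - 3 := by omega
  -- final contradiction via db y x
  have hdbyx : db G y x ≤ 2 := db_le_two hdeg hnd hM4 hn hxy.symm
  have hdbzy : db G z y ≤ 2 := db_le_two hdeg hnd hM4 hn hyz.symm
  -- w ∈ Nb z \ cNb y
  have hwzy : w ∈ Nb G z \ cNb G y := by
    rw [Finset.mem_sdiff, mem_cNb]
    push_neg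
    exact ⟨mem_Nb.2 hzw, fun he => hywne he.symm, hyw⟩
  -- (Nb z ∩ Nb w) \ Nb y is small
  have hsmall : ((Nb G z ∩ Nb G w) \ Nb G y).card ≤ 1 := by
    have hsub2 : (Nb G z ∩ Nb G w) \ Nb G y ⊆ (Nb G z \ cNb G y).erase w := by
      intro v hv
      rw [Finset.mem_sdiff, Finset.mem_inter] at hv
      obtain ⟨⟨hvz, hvw⟩, hvy⟩ := hv
      rw [Finset.mem_erase, Finset.mem_sdiff, mem_cNb]
      push_neg
      refine ⟨fun he => G.irrefl (he ▸ (mem_Nb.1 hvw)), hvz, fun he => ?_, fun ha => hvy (mem_Nb.2 ha)⟩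
      exact hyw (he ▸ (mem_Nb.1 hvw)).symm
    calc ((Nb G z ∩ Nb G w) \ Nb G y).card ≤ ((Nb G z \ cNb G y).erase w).card :=
          Finset.card_le_card hsub2
      _ = db G z y - 1 := by rw [Finset.card_erase_of_mem hwzy, db]
      _ ≤ 1 := by omega
  have hS0 : n - 4 ≤ ((Nb G z ∩ Nb G w) ∩ Nb G y).card := by
    have := Finset.card_inter_add_card_sdiff (Nb G z ∩ Nb G w) (Nb G y)
    have hlzw : (Nb G z ∩ Nb G w).card = n - 3 := by rw [← hlamzw]; rfl
    omega
  -- lower bound for db y x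
  have hlow : 1 + ((Nb G z ∩ Nb G w) ∩ Nb G y).card ≤ db G y x := by
    have hznot : z ∉ (Nb G z ∩ Nb G w) ∩ Nb G y := by
      simp [mem_Nb, G.irrefl]
    have hsub3 : insert z ((Nb G z ∩ Nb G w) ∩ Nb G y) ⊆ Nb G y \ cNb G x := by
      intro v hv
      rcases Finset.mem_insert.1 hv with rfl | hv2
      · rw [Finset.mem_sdiff, mem_cNb]
        push_neg
        exact ⟨mem_Nb.2 hyz, fun he => hxzne he.symm, hxz⟩
      · rw [Finset.mem_inter, Finset.mem_inter] at hv2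
        obtain ⟨⟨hvz, hvw⟩, hvy⟩ := hv2
        rw [Finset.mem_sdiff, mem_cNb]
        push_neg
        refine ⟨hvy, fun he => hxw (he ▸ (mem_Nb.1 hvw)).symm, fun ha => ?_⟩
        have : v ∈ Nb G x ∩ Nb G w := Finset.mem_inter.2 ⟨mem_Nb.2 ha, hvw⟩
        rw [hcom] at this
        exact absurd this (Finset.notMem_empty v)
    calc 1 + ((Nb G z ∩ Nb G w) ∩ Nb G y).card
        = (insert z ((Nb G z ∩ Nb G w) ∩ Nb G y)).card := by
          rw [Finset.card_insert_of_notMem hznot]; ring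
      _ ≤ db G y x := Finset.card_le_card hsub3
  omega

lemma card_adj_fiber_snd {G : SimpleGraph V} (U B : Finset V) :
    ((U ×ˢ B).filter (fun p => G.Adj p.1 p.2)).card = ∑ b ∈ B, (Nb G b ∩ U).card := by
  rw [Finset.card_eq_sum_card_fiberwise (f := Prod.snd) (t := B)
    (fun (p : V × V) (hp : p ∈ (U ×ˢ B).filter (fun q : V × V => G.Adj q.1 q.2)) => by simp only [Finset.mem_filter, Finset.mem_product] at hp; exact hp.1.2)]
  apply Finset.sum_congr rfl
  intro b hb
  have : ((U ×ˢ B).filter (fun p => G.Adj p.1 p.2)).filter (fun p => p.2 = b)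
      = (Nb G b ∩ U) ×ˢ {b} := by
    ext ⟨c, d⟩
    simp only [Finset.mem_filter, Finset.mem_product, Finset.mem_singleton, Finset.mem_inter,
      mem_Nb]
    constructor
    · rintro ⟨⟨⟨h1, h2⟩, h3⟩, rfl⟩
      exact ⟨⟨h3.symm, h1⟩, rfl⟩
    · rintro ⟨⟨h1, h2⟩, rfl⟩
      exact ⟨⟨⟨h2, hb⟩, h1.symm⟩, rfl⟩
  rw [this, Finset.card_product, Finset.card_singleton, mul_one]

/-- Step 4 : the final contradiction. -/
lemma final_step {G : SimpleGraph V} {n M : ℕ}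
    (hdeg : ∀ v, (Nb G v).card = n) (hnd : ∀ v, (nd G v).card = M)
    (hM2 : 2 ≤ M) (hM4 : M ≤ 2*n - 4) (hMn : M ≠ n) (hn : 4 ≤ n) (hneven : Even n)
    (x : V) : False := by
  set D2 : Finset V :=
    Finset.univ.filter (fun v => v ≠ x ∧ ¬ G.Adj x v ∧ (Nb G x ∩ Nb G v).Nonempty) with hD2
  have hmemD2 : ∀ v, v ∈ D2 ↔ v ≠ x ∧ ¬ G.Adj x v ∧ (Nb G x ∩ Nb G v).Nonempty := by
    intro v; simp [hD2]
  set p := D2.card with hp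
  -- (1) : for y ∈ Nb x, outside-neighbours lie in D2
  have hND2 : ∀ y ∈ Nb G x, Nb G y \ cNb G x = Nb G y ∩ D2 := by
    intro y hy
    ext q
    rw [Finset.mem_sdiff, Finset.mem_inter, mem_cNb, hmemD2]
    constructor
    · rintro ⟨hq1, hq2⟩
      push_neg at hq2
      exact ⟨hq1, hq2.1, hq2.2,
        ⟨y, Finset.mem_inter.2 ⟨hy, mem_Nb.2 (mem_Nb.1 hq1).symm⟩⟩⟩
    · rintro ⟨hq1, hq2, hq3, _⟩
      refine ⟨hq1, ?_⟩
      push_neg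
      exact ⟨hq2, hq3⟩
  -- (2) : M = ∑_{y ∈ Nb x} |Nb y ∩ D2|
  have hsum1 : ∑ y ∈ Nb G x, (Nb G y ∩ D2).card = M := by
    rw [← hnd x, ← sum_db]
    apply Finset.sum_congr rfl
    intro y hy
    rw [db_symm hdeg (mem_Nb.1 hy), db, hND2 y hy]
  -- (3) : double counting
  have hsum2 : ∑ v ∈ D2, (Nb G v ∩ Nb G x).card = M := by
    rw [← card_adj_fiber_snd (Nb G x) D2, card_adj_fiber, hsum1]
  -- (4) : closure
  have hclose : ∀ v ∈ D2, Nb G v ⊆ Nb G x ∪ D2 := by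
    intro v hv q hq
    rw [hmemD2] at hv
    obtain ⟨hvx, hvadj, y0, hy0⟩ := hv
    rw [Finset.mem_inter] at hy0
    rw [Finset.mem_union]
    by_cases hqx : q ∈ Nb G x
    · exact Or.inl hqx
    · refine Or.inr ((hmemD2 q).2 ⟨?_, ?_, ?_⟩)
      · rintro rfl
        exact hvadj (mem_Nb.1 hq).symm
      · exact fun ha => hqx (mem_Nb.2 ha)
      · by_contra hempty
        rw [Finset.not_nonempty_iff_eq_empty] at hempty
        have c1 : G.Adj x y0 := mem_Nb.1 hy0.1
        have c2 : G.Adj y0 v := (mem_Nb.1 hy0.2).symm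
        have c3 : G.Adj v q := mem_Nb.1 hq
        have c5 : x ≠ v := fun he => hvx he.symm
        have c6 : ¬ G.Adj x q := fun ha => hqx (mem_Nb.2 ha)
        exact step3 hdeg hnd hM4 hMn hn hneven c1 c2 c3 hvadj c5 c6 hempty
  -- Nb x and D2 are disjoint
  have hdisjxD2 : ∀ v, v ∈ Nb G x → v ∉ D2 := by
    intro v hv hv2
    rw [hmemD2] at hv2
    exact hv2.2.1 (mem_Nb.1 hv)
  -- (5) : per-vertex partition
  have hpart : ∀ v ∈ D2, n = (Nb G v ∩ Nb G x).card + (Nb G v ∩ D2).card := by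
    intro v hv
    have hsplit : Nb G v = (Nb G v ∩ Nb G x) ∪ (Nb G v ∩ D2) := by
      rw [← Finset.inter_union_distrib_left]
      exact (Finset.inter_eq_left.2 (hclose v hv)).symm
    have hdisj : Disjoint (Nb G v ∩ Nb G x) (Nb G v ∩ D2) := by
      rw [Finset.disjoint_left]
      intro a ha1 ha2
      exact hdisjxD2 a (Finset.mem_inter.1 ha1).2 (Finset.mem_inter.1 ha2).2
    rw [← hdeg v]
    conv_lhs => rw [hsplit]
    exact Finset.card_union_of_disjoint hdisj
  -- (6) : lower bound per vertex
  have hlamlow : ∀ v ∈ D2, 2*n ≤ 2*(Nb G v ∩ Nb G x).card + M := by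
    intro v hv
    rw [hmemD2] at hv
    obtain ⟨hvx, hvadj, y0, hy0⟩ := hv
    rw [Finset.mem_inter] at hy0
    have := step2 hdeg hnd hn hvadj (fun he => hvx he.symm) (mem_Nb.1 hy0.1).symm
      (mem_Nb.1 hy0.2).symm
    rw [lam, Finset.inter_comm] at this
    convert this using 2
  -- (7) : bound on internal degrees
  have hint : ∀ v ∈ D2, (Nb G v ∩ D2).card ≤ p - 1 := by
    intro v hv
    have : Nb G v ∩ D2 ⊆ D2.erase v := by
      intro a ha
      rw [Finset.mem_erase]
      rw [Finset.mem_inter] at ha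
      exact ⟨fun he => G.irrefl (mem_Nb.1 (he ▸ ha.1)), ha.2⟩
    calc (Nb G v ∩ D2).card ≤ (D2.erase v).card := Finset.card_le_card this
      _ = p - 1 := by rw [Finset.card_erase_of_mem hv]
  -- summed identities
  have hA : p * n ≤ M + p * (p - 1) := by
    have h1 : ∑ v ∈ D2, n = p * n := by rw [Finset.sum_const, smul_eq_mul, hp]
    have h2 : ∑ v ∈ D2, n
        = ∑ v ∈ D2, (Nb G v ∩ Nb G x).card + ∑ v ∈ D2, (Nb G v ∩ D2).card := by
      rw [← Finset.sum_add_distrib]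
      exact Finset.sum_congr rfl hpart
    have h3 : ∑ v ∈ D2, (Nb G v ∩ D2).card ≤ p * (p - 1) := by
      calc ∑ v ∈ D2, (Nb G v ∩ D2).card ≤ ∑ _v ∈ D2, (p - 1) := Finset.sum_le_sum hint
        _ = p * (p-1) := by rw [Finset.sum_const, smul_eq_mul, hp]
    omega
  have hB : 2 * (p * n) ≤ 2 * M + p * M := by
    have h1 : ∑ v ∈ D2, (2 * n) ≤ ∑ v ∈ D2, (2*(Nb G v ∩ Nb G x).card + M) :=
      Finset.sum_le_sum hlamlow
    rw [Finset.sum_const, smul_eq_mul, Finset.sum_add_distrib, ← Finset.mul_sum, hsum2,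
      Finset.sum_const, smul_eq_mul, ← hp] at h1
    have h2 : p * (2*n) = 2*(p*n) := by ring
    omega
  -- case analysis on p
  have hp0 : p ≠ 0 := by
    intro h0
    rw [hp] at h0
    rw [Finset.card_eq_zero.1 h0, Finset.sum_empty] at hsum2
    omega
  have hp1 : p ≠ 1 := by
    intro h1
    obtain ⟨v, hv⟩ := Finset.card_eq_one.1 (hp ▸ h1)
    have hvmem : v ∈ D2 := by rw [hv]; exact Finset.mem_singleton_self v
    have h2 := hpart v hvmem
    have h3 := hint v hvmem
    rw [hv, Finset.sum_singleton] at hsum2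
    omega
  rcases Nat.lt_or_ge p 3 with h3 | h3
  · have hp2 : p = 2 := by omega
    have e1 : p * n = 2 * n := by rw [hp2]
    have e2 : p * (p - 1) = 2 := by rw [hp2]
    omega
  · -- p ≥ 3 : numeric contradiction
    have h2nM : M + 4 ≤ 2*n := by omega
    have h4p : 4 * p ≤ 2 * M := by
      have h5 := Nat.mul_le_mul_left p h2nM
      nlinarith [hB]
    have hpn2 : p + 2 ≤ n := by omega
    obtain ⟨q, hq⟩ : ∃ q, p = q + 3 := ⟨p - 3, by omega⟩
    obtain ⟨r, hr⟩ : ∃ r, n = p + 2 + r := ⟨n - (p + 2), by omega⟩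
    rw [hq] at hA hr
    have e3 : q + 3 - 1 = q + 2 := by omega
    rw [e3] at hA
    rw [hr] at hA h2nM
    nlinarith [hA, h2nM]

lemma two_choose (m : ℕ) : 2 * Nat.choose m 2 = m * (m - 1) := by
  rw [Nat.choose_two_right]
  refine Nat.mul_div_cancel' ?_ 
  rcases Nat.even_or_odd m with he | ho
  · exact Dvd.dvd.mul_right he.two_dvd _
  · rcases ho with ⟨k, hk⟩
    exact Dvd.dvd.mul_left (by omega : (2:ℕ) ∣ m - 1) m

lemma deg_eq_Nb {G : SimpleGraph V} (v : V) : deg G v = (Nb G v).card := by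
  rw [deg]
  rw [Set.ncard_eq_toFinset_card']
  congr 1
  ext w
  simp [Nb, SimpleGraph.mem_neighborSet]


end Aux

theorem stmt15 (r2 r3 : ℕ) (hr2 : 4 ≤ r2) (heven : Even r2)
    (h : (Nat.choose (r2 - 1) 2 < r3 ∧ r3 < 4 * Nat.choose (r2 / 2) 2) ∨
      (4 * Nat.choose (r2 / 2) 2 < r3 ∧ r3 < Nat.choose r2 2)) :
    ¬ ∃ (V : Type) (_ : Fintype V) (_ : Nonempty V) (G : SimpleGraph V),
      HasParams G r2 r3 := by
  rintro ⟨V, iF, iN, G, hPar⟩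
  set n := r2 with hn
  set M : ℕ := n * n - n - 2 * r3 with hM
  have hdeg : ∀ v, (Nb G v).card = n := by
    intro v
    rw [← deg_eq_Nb, (hPar v).1]
  have hndM : ∀ v, (nd G v).card = M := by
    intro v
    have h1 := card_nd_add_ed (G := G) v
    rw [hdeg, card_ed, (hPar v).2] at h1
    have h2 : 2 * r3 ≤ n * n - n := by omega
    omega
  -- arithmetic facts
  obtain ⟨m, hm⟩ := heven
  have hdiv : n / 2 = m := by omega
  have hc1 : 2 * Nat.choose n 2 = n * (n - 1) := two_choose n
  have hc2 : 2 * Nat.choose (n - 1) 2 = (n - 1) * (n - 2) := by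
    have h2 := two_choose (n - 1)
    rwa [show n - 1 - 1 = n - 2 from by omega] at h2
  have hc3 : 2 * (4 * Nat.choose (n / 2) 2) = 4 * (m * (m - 1)) := by
    rw [hdiv]
    have := two_choose m
    omega
  obtain ⟨k, hk⟩ : ∃ k, m = k + 2 := ⟨m - 2, by omega⟩
  have hk4 : n = 2*k + 4 := by omega
  obtain ⟨K, hK⟩ : ∃ K, k * k = K := ⟨_, rfl⟩
  have g1 : n*n = 4*K + 16*k + 16 := by rw [hk4, ← hK]; ring
  have g2 : (n-1)*(n-2) = 4*K + 10*k + 6 := by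
    rw [show n-1 = 2*k+3 from by omega, show n-2 = 2*k+2 from by omega, ← hK]; ring
  have g3 : m*(m-1) = K + 3*k + 2 := by
    rw [hk, show k+2-1 = k+1 from by omega, ← hK]; ring
  have g4 : n*(n-1) = 4*K + 14*k + 12 := by
    rw [show n-1 = 2*k+3 from by omega, hk4, ← hK]; ring
  obtain v0 : V := Classical.arbitrary V
  have hadd : M + 2*r3 = n*n - n := by
    have h1 := card_nd_add_ed (G := G) v0
    rw [hdeg, card_ed, (hPar v0).2, hndM] at h1
    exact h1
  have key : 2 ≤ M ∧ M ≤ 2*n - 4 ∧ M ≠ n := by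
    rcases h with ⟨h1, h2⟩ | ⟨h1, h2⟩ <;> exact ⟨by omega, by omega, by omega⟩
  exact final_step hdeg hndM key.1 key.2.1 key.2.2 hr2 ⟨m, hm⟩ v0
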